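/- arXiv:0901.2317 — 2 statements merged into one kernel-verified Lean document; each statement's English description precedes it below -/
import Mathlib

section
/- Let ∂ be a ℤ-linear map from chains on S to chains on T, and let B be a subchain of a chain A which is not a component of A. Then there exists a subchain C of A − B with ‖C‖ = 1 such that ‖∂(B + C)‖ < ‖∂B‖ + ‖∂C‖, and B + C is again a subchain of A. -/
/-- The volume of a chain `A : S →₀ ℤ`: the sum of the absolute values of its
coefficients. -/
def vol {S : Type*} (A : S →₀ ℤ) : ℕ := ∑ s ∈ A.support, (A s).natAbs

/-- `B` is a subchain of `A` when `‖A‖ = ‖B‖ + ‖A - B‖`. -/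
def Subchain {S : Type*} (B A : S →₀ ℤ) : Prop := vol A = vol B + vol (A - B)

/-- Given a boundary map `d`, `B` is a component of `A` if `B` is a subchain of `A`
and `d B` is a subchain of `d A`. -/
def Component {S T : Type*} (d : (S →₀ ℤ) →ₗ[ℤ] (T →₀ ℤ)) (B A : S →₀ ℤ) : Prop :=
  Subchain B A ∧ Subchain (d B) (d A)

lemma vol_eq_sum {S : Type*} (A : S →₀ ℤ) (F : Finset S) (h : A.support ⊆ F) :
    vol A = ∑ s ∈ F, (A s).natAbs :=
  Finset.sum_subset h (fun s _ hs => by simp [Finsupp.notMem_support_iff.mp hs])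

lemma subchain_iff_pointwise {S : Type*} (B A : S →₀ ℤ) :
    Subchain B A ↔ ∀ s, (A s).natAbs = (B s).natAbs + (A s - B s).natAbs := by
  classical
  set F := A.support ∪ B.support ∪ (A - B).support with hF
  have hAF : A.support ⊆ F := by
    intro x hx; rw [hF]; simp only [Finset.mem_union]; tauto
  have hBF : B.support ⊆ F := by
    intro x hx; rw [hF]; simp only [Finset.mem_union]; tauto
  have hABF : (A - B).support ⊆ F := by
    intro x hx; rw [hF]; simp only [Finset.mem_union]; tauto
  have hsplit : Subchain B A ↔
      ∑ s ∈ F, (A s).natAbs = ∑ s ∈ F, ((B s).natAbs + ((A - B) s).natAbs) := by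
    rw [Subchain, vol_eq_sum A F hAF, vol_eq_sum B F hBF, vol_eq_sum (A - B) F hABF,
      Finset.sum_add_distrib]
  constructor
  · intro h s
    rw [hsplit] at h
    have hle : ∀ i ∈ F, (A i).natAbs ≤ (B i).natAbs + ((A - B) i).natAbs := by
      intro i _
      simp only [Finsupp.sub_apply]
      omega
    have := (Finset.sum_eq_sum_iff_of_le hle).mp h
    by_cases hs : s ∈ F
    · have := this s hs
      simpa [Finsupp.sub_apply] using this
    · have hA0 : A s = 0 := by
        by_contra h0; exact hs (hAF (Finsupp.mem_support_iff.mpr h0))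
      have hB0 : B s = 0 := by
        by_contra h0; exact hs (hBF (Finsupp.mem_support_iff.mpr h0))
      rw [hA0, hB0]; simp
  · intro h
    rw [hsplit]
    refine Finset.sum_congr rfl fun s _ => ?_
    simpa [Finsupp.sub_apply] using h s

set_option maxHeartbeats 1600000 in
/-- If `B` is a subchain of `A` but not a component of `A`, then some volume-one
subchain `C` of `A - B` strictly lowers the boundary volume when added to `B`,
and `B + C` is again a subchain of `A`. -/
theorem exists_growth_cell {S T : Type*} (d : (S →₀ ℤ) →ₗ[ℤ] (T →₀ ℤ))
    (A B : S →₀ ℤ) (hsub : Subchain B A) (hnotcomp : ¬ Component d B A) :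
    ∃ C : S →₀ ℤ, Subchain C (A - B) ∧ vol C = 1 ∧
      vol (d (B + C)) < vol (d B) + vol (d C) ∧ Subchain (B + C) A := by
  classical
  set R := A - B with hRdef
  have hnots : ¬ Subchain (d B) (d A) := fun h => hnotcomp ⟨hsub, h⟩
  rw [subchain_iff_pointwise] at hnots
  push_neg at hnots
  obtain ⟨t, ht⟩ := hnots
  have hdR : d A t - d B t = d R t := by
    rw [hRdef, map_sub]; simp
  have hsigns : (0 < d B t ∧ d R t < 0) ∨ (d B t < 0 ∧ 0 < d R t) := by omega
  -- decompose d R t over the support of R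
  have hsum : d R t = ∑ s ∈ R.support, (d (Finsupp.single s (R s))) t := by
    conv_lhs => rw [← Finsupp.sum_single R]
    rw [Finsupp.sum, map_sum]
    simp [Finsupp.finset_sum_apply]
  have hexists : ∃ s ∈ R.support,
      ((0 < d B t ∧ (d (Finsupp.single s (R s))) t < 0) ∨
       (d B t < 0 ∧ 0 < (d (Finsupp.single s (R s))) t)) := by
    rcases hsigns with ⟨hB, hRt⟩ | ⟨hB, hRt⟩
    · by_contra hc
      push_neg at hc
      have : (0:ℤ) ≤ ∑ s ∈ R.support, (d (Finsupp.single s (R s))) t :=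
        Finset.sum_nonneg fun s hs => by
          have := hc s hs; rcases this with ⟨h1, _⟩; omega
      omega
    · by_contra hc
      push_neg at hc
      have : ∑ s ∈ R.support, (d (Finsupp.single s (R s))) t ≤ 0 :=
        Finset.sum_nonpos fun s hs => by
          have := hc s hs; rcases this with ⟨h1, _⟩; omega
      omega
  obtain ⟨s, hsmem, hx⟩ := hexists
  have hRs : R s ≠ 0 := Finsupp.mem_support_iff.mp hsmem
  set ε : ℤ := if 0 < R s then 1 else -1 with hεdef
  have hε : (0 < R s ∧ ε = 1) ∨ (R s < 0 ∧ ε = -1) := by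
    rw [hεdef]; split_ifs with h <;> omega
  set C : S →₀ ℤ := Finsupp.single s ε with hCdef
  have hεne : ε ≠ 0 := by rcases hε with ⟨_, h⟩ | ⟨_, h⟩ <;> simp [h]
  -- relate d (single s (R s)) to d C
  have hscale : Finsupp.single s (R s) = ((R s).natAbs : ℤ) • C := by
    rw [hCdef, Finsupp.smul_single, smul_eq_mul]
    congr 1
    rcases hε with ⟨h1, h2⟩ | ⟨h1, h2⟩ <;> rw [h2] <;> omega
  have hxC : (d (Finsupp.single s (R s))) t = ((R s).natAbs : ℤ) * (d C) t := by
    rw [hscale, map_smul, Finsupp.smul_apply, smul_eq_mul]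
  have hnpos : (0:ℤ) < ((R s).natAbs : ℤ) := by
    have : (R s).natAbs ≠ 0 := by omega
    exact_mod_cast Nat.pos_of_ne_zero this
  have hopp : (0 < d B t ∧ d C t < 0) ∨ (d B t < 0 ∧ 0 < d C t) := by
    rcases hx with ⟨h1, h2⟩ | ⟨h1, h2⟩
    · left
      refine ⟨h1, ?_⟩
      rw [hxC] at h2
      by_contra hc
      push_neg at hc
      exact absurd (mul_nonneg (le_of_lt hnpos) hc) (not_le.mpr h2)
    · right
      refine ⟨h1, ?_⟩
      rw [hxC] at h2
      by_contra hc
      push_neg at hc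
      have : ((R s).natAbs : ℤ) * (d C) t ≤ 0 := mul_nonpos_of_nonneg_of_nonpos (le_of_lt hnpos) hc
      omega
  refine ⟨C, ?_, ?_, ?_, ?_⟩
  · -- Subchain C R
    rw [subchain_iff_pointwise]
    intro s'
    by_cases h : s' = s
    · subst h
      rw [hCdef]
      simp only [Finsupp.single_eq_same]
      rcases hε with ⟨h1, h2⟩ | ⟨h1, h2⟩ <;> rw [h2] <;> omega
    · rw [hCdef]
      rw [Finsupp.single_apply]
      simp [Ne.symm h]
  · -- vol C = 1
    rw [hCdef, vol, Finsupp.support_single_ne_zero s hεne, Finset.sum_singleton,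
      Finsupp.single_eq_same]
    rcases hε with ⟨_, h2⟩ | ⟨_, h2⟩ <;> simp [h2]
  · -- strict inequality
    clear_value C ε R
    set G := (d (B + C)).support ∪ (d B).support ∪ (d C).support ∪ {t} with hG
    have h1 : (d (B + C)).support ⊆ G := by
      intro x hx'; rw [hG]; simp only [Finset.mem_union]; tauto
    have h2 : (d B).support ⊆ G := by
      intro x hx'; rw [hG]; simp only [Finset.mem_union]; tauto
    have h3 : (d C).support ⊆ G := by
      intro x hx'; rw [hG]; simp only [Finset.mem_union]; tauto
    rw [vol_eq_sum _ G h1, vol_eq_sum _ G h2, vol_eq_sum _ G h3, ← Finset.sum_add_distrib]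
    apply Finset.sum_lt_sum
    · intro i _
      have : d (B + C) i = d B i + d C i := by rw [map_add]; simp
      omega
    · refine ⟨t, by rw [hG]; simp only [Finset.mem_union, Finset.mem_singleton]; tauto, ?_⟩
      have hBC : d (B + C) t = d B t + d C t := by rw [map_add]; simp
      rcases hopp with ⟨ha, hb⟩ | ⟨ha, hb⟩ <;> omega
  · -- Subchain (B + C) A
    rw [subchain_iff_pointwise] at hsub ⊢
    intro s'
    have hs' := hsub s'
    by_cases h : s' = s
    · subst h
      have hRsv : R s' = A s' - B s' := by rw [hRdef]; simp
      rw [hCdef]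
      simp only [Finsupp.add_apply, Finsupp.single_eq_same]
      rcases hε with ⟨h1, h2⟩ | ⟨h1, h2⟩ <;> rw [h2] <;> omega
    · rw [hCdef]
      simp only [Finsupp.add_apply, Finsupp.single_apply]
      simp [Ne.symm h, hs']
end

section
/- Let ∂ be a ℤ-linear map from chains on S to chains on T. Let B₁, …, Bₘ be chains on T with pairwise disjoint supports, each lying in the range of ∂, and let A = B₁ + ⋯ + Bₘ. Suppose that for every connected chain C on S with ‖C‖ ≤ FV(A), the support of ∂C meets the support of Bᵢ for at most one index i. Then FV(A) = FV(B₁) + ⋯ + FV(Bₘ). -/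
/-- A chain is connected if its only components are `0` and itself. -/
def Connected {S T : Type*} (d : (S →₀ ℤ) →ₗ[ℤ] (T →₀ ℤ)) (A : S →₀ ℤ) : Prop :=
  ∀ B : S →₀ ℤ, Component d B A → B = 0 ∨ B = A


lemma vol_eq_sum_subset {S : Type*} (A : S →₀ ℤ) {u : Finset S} (h : A.support ⊆ u) :
    vol A = ∑ s ∈ u, (A s).natAbs := by
  refine Finset.sum_subset h fun s _ hs => ?_
  simp [Finsupp.notMem_support_iff.mp hs]

lemma vol_zero {S : Type*} : vol (0 : S →₀ ℤ) = 0 := by simp [vol]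

lemma vol_eq_zero {S : Type*} {A : S →₀ ℤ} : vol A = 0 ↔ A = 0 := by
  constructor
  · intro h
    ext s
    by_contra hs
    have hs' : s ∈ A.support := Finsupp.mem_support_iff.mpr (by simpa using hs)
    have := Finset.sum_eq_zero_iff.mp h s hs'
    simp_all [Finsupp.mem_support_iff]
  · rintro rfl; exact vol_zero

lemma vol_add_le {S : Type*} (A B : S →₀ ℤ) : vol (A + B) ≤ vol A + vol B := by
  classical
  rw [vol_eq_sum_subset A (u := A.support ∪ B.support ∪ (A + B).support)
      (Finset.subset_union_left.trans Finset.subset_union_left),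
    vol_eq_sum_subset B (Finset.subset_union_right.trans Finset.subset_union_left),
    vol_eq_sum_subset (A + B) Finset.subset_union_right,
    ← Finset.sum_add_distrib]
  refine Finset.sum_le_sum fun s _ => ?_
  simp only [Finsupp.add_apply]
  exact Int.natAbs_add_le _ _

lemma vol_sum_le {S ι : Type*} (s : Finset ι) (f : ι → (S →₀ ℤ)) :
    vol (∑ i ∈ s, f i) ≤ ∑ i ∈ s, vol (f i) := by
  classical
  induction s using Finset.induction with
  | empty => simp [vol_zero]
  | insert _ _ hx ih =>
    rw [Finset.sum_insert hx, Finset.sum_insert hx]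
    exact (vol_add_le _ _).trans (by omega)

lemma subchain_iff {S : Type*} {B A : S →₀ ℤ} :
    Subchain B A ↔ ∀ s, (A s).natAbs = (B s).natAbs + (A s - B s).natAbs := by
  classical
  set u := A.support ∪ B.support ∪ (A - B).support with hu
  have hA : vol A = ∑ s ∈ u, (A s).natAbs :=
    vol_eq_sum_subset A (Finset.subset_union_left.trans Finset.subset_union_left)
  have hB : vol B = ∑ s ∈ u, (B s).natAbs :=
    vol_eq_sum_subset B (Finset.subset_union_right.trans Finset.subset_union_left)
  have hAB : vol (A - B) = ∑ s ∈ u, (A s - B s).natAbs := by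
    rw [vol_eq_sum_subset (A - B) Finset.subset_union_right]
    exact Finset.sum_congr rfl fun s _ => by rw [Finsupp.sub_apply]
  have hle : ∀ s, (A s).natAbs ≤ (B s).natAbs + (A s - B s).natAbs := by
    intro s
    have : A s = B s + (A s - B s) := by ring
    calc (A s).natAbs = (B s + (A s - B s)).natAbs := by rw [← this]
    _ ≤ _ := Int.natAbs_add_le _ _
  constructor
  · intro h s
    by_cases hs : s ∈ u
    · have heq : ∑ s ∈ u, (A s).natAbs = ∑ s ∈ u, ((B s).natAbs + (A s - B s).natAbs) := by
        rw [← hA, Finset.sum_add_distrib, ← hB, ← hAB]; exact h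
      exact (Finset.sum_eq_sum_iff_of_le (fun i _ => hle i)).mp heq s hs
    · simp only [hu, Finset.mem_union, not_or, Finsupp.mem_support_iff, not_not] at hs
      simp [hs.1.1, hs.1.2]
  · intro h
    rw [Subchain, hA, hB, hAB, ← Finset.sum_add_distrib]
    exact Finset.sum_congr rfl fun s _ => h s

lemma subchain_refl {S : Type*} (A : S →₀ ℤ) : Subchain A A := by
  simp [Subchain, vol_zero]

lemma subchain_zero {S : Type*} (A : S →₀ ℤ) : Subchain 0 A := by
  simp [Subchain, vol_zero]

lemma Subchain.support_subset {S : Type*} {B A : S →₀ ℤ} (h : Subchain B A) :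
    B.support ⊆ A.support := by
  intro s hs
  rw [Finsupp.mem_support_iff] at hs ⊢
  have := subchain_iff.mp h s
  intro h0
  rw [h0] at this
  simp only [Int.natAbs_zero] at this
  omega

lemma Subchain.trans {S : Type*} {B' B A : S →₀ ℤ} (h1 : Subchain B' B) (h2 : Subchain B A) :
    Subchain B' A := by
  rw [subchain_iff] at *
  intro s
  have t1 := h1 s
  have t2 := h2 s
  have e1 : (A s - B' s).natAbs ≤ (A s - B s).natAbs + (B s - B' s).natAbs := by
    have : A s - B' s = (A s - B s) + (B s - B' s) := by ring
    rw [this]; exact Int.natAbs_add_le _ _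
  have e2 : (A s).natAbs ≤ (B' s).natAbs + (A s - B' s).natAbs := by
    have : A s = B' s + (A s - B' s) := by ring
    calc (A s).natAbs = (B' s + (A s - B' s)).natAbs := by rw [← this]
    _ ≤ _ := Int.natAbs_add_le _ _
  omega

lemma Subchain.sub {S : Type*} {B A : S →₀ ℤ} (h : Subchain B A) : Subchain (A - B) A := by
  rw [subchain_iff] at *
  intro s
  have := h s
  simp only [Finsupp.sub_apply] at *
  have : A s - (A s - B s) = B s := by ring
  rw [this]
  omega

lemma Component.refl {S T : Type*} (d : (S →₀ ℤ) →ₗ[ℤ] (T →₀ ℤ)) (A : S →₀ ℤ) :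
    Component d A A := ⟨subchain_refl A, subchain_refl (d A)⟩

lemma Component.trans {S T : Type*} {d : (S →₀ ℤ) →ₗ[ℤ] (T →₀ ℤ)} {B' B A : S →₀ ℤ}
    (h1 : Component d B' B) (h2 : Component d B A) : Component d B' A :=
  ⟨h1.1.trans h2.1, h1.2.trans h2.2⟩

lemma Component.sub {S T : Type*} {d : (S →₀ ℤ) →ₗ[ℤ] (T →₀ ℤ)} {B A : S →₀ ℤ}
    (h : Component d B A) : Component d (A - B) A := by
  refine ⟨h.1.sub, ?_⟩
  rw [map_sub]
  exact h.2.sub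

lemma decomp {S T : Type*} (d : (S →₀ ℤ) →ₗ[ℤ] (T →₀ ℤ)) (N : ℕ) :
    ∀ C : S →₀ ℤ, vol C ≤ N → ∃ n, ∃ f : Fin n → (S →₀ ℤ),
      (∀ k, Connected d (f k)) ∧ (∀ k, Component d (f k) C) ∧
      (∑ k, f k) = C ∧ (∑ k, vol (f k)) = vol C := by
  induction N with
  | zero =>
    intro C hC
    have : C = 0 := vol_eq_zero.mp (Nat.le_zero.mp hC)
    subst this
    exact ⟨0, ![], by simp, by simp, by simp, by simp [vol_zero]⟩
  | succ N ih =>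
    intro C hC
    by_cases hconn : Connected d C
    · refine ⟨1, ![C], ?_, ?_, by simp, by simp⟩
      · intro k; fin_cases k <;> simpa using hconn
      · intro k; fin_cases k <;> simpa using Component.refl d C
    · rw [Connected] at hconn
      push_neg at hconn
      obtain ⟨D, hD, hD0, hDC⟩ := hconn
      have hv : vol C = vol D + vol (C - D) := hD.1
      have hD0' : vol D ≠ 0 := fun h => hD0 (vol_eq_zero.mp h)
      have hCD0' : vol (C - D) ≠ 0 := fun h => hDC (by
        have := vol_eq_zero.mp h
        exact (sub_eq_zero.mp this).symm)
      have h1 : vol D ≤ N := by omega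
      have h2 : vol (C - D) ≤ N := by omega
      obtain ⟨n1, f1, hcon1, hcomp1, hsum1, hvol1⟩ := ih D h1
      obtain ⟨n2, f2, hcon2, hcomp2, hsum2, hvol2⟩ := ih (C - D) h2
      refine ⟨n1 + n2, Fin.append f1 f2, ?_, ?_, ?_, ?_⟩
      · intro k
        refine Fin.addCases (fun i => ?_) (fun i => ?_) k
        · rw [Fin.append_left]; exact hcon1 i
        · rw [Fin.append_right]; exact hcon2 i
      · intro k
        refine Fin.addCases (fun i => ?_) (fun i => ?_) k
        · rw [Fin.append_left]; exact (hcomp1 i).trans hD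
        · rw [Fin.append_right]; exact (hcomp2 i).trans hD.sub
      · rw [Fin.sum_univ_add]
        simp only [Fin.append_left, Fin.append_right, hsum1, hsum2]
        abel
      · rw [Fin.sum_univ_add]
        simp only [Fin.append_left, Fin.append_right, hvol1, hvol2]
        omega

/-- The filling volume of a chain `A` on `T` (in the range of `d`): the least volume
of a chain `C` on `S` with `d C = A`. -/
noncomputable def FV {S T : Type*} (d : (S →₀ ℤ) →ₗ[ℤ] (T →₀ ℤ)) (A : T →₀ ℤ) : ℕ :=
  sInf (vol '' {C : S →₀ ℤ | d C = A})

/-- If the fillable chains `B₁, …, Bₘ` have pairwise disjoint supports and are so far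
apart that no small connected chain on `S` has boundary meeting the supports of two
of them, then the filling volume of their sum is the sum of their filling volumes. -/
theorem FV_sum_of_separated {S T : Type*} [DecidableEq T] (d : (S →₀ ℤ) →ₗ[ℤ] (T →₀ ℤ))
    (m : ℕ) (B : Fin m → (T →₀ ℤ))
    (hdisj : ∀ i j : Fin m, i ≠ j → Disjoint (B i).support (B j).support)
    (hrange : ∀ i, B i ∈ Set.range d)
    (hsep : ∀ C : S →₀ ℤ, Connected d C → vol C ≤ FV d (∑ i, B i) →
      {i : Fin m | ((d C).support ∩ (B i).support).Nonempty}.Subsingleton) :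
    FV d (∑ i, B i) = ∑ i, FV d (B i) := by
  classical
  set A := ∑ i, B i with hA
  have hBne : ∀ i, (vol '' {C : S →₀ ℤ | d C = B i}).Nonempty := by
    intro i; obtain ⟨c, hc⟩ := hrange i; exact ⟨vol c, c, hc, rfl⟩
  have hAne : (vol '' {C : S →₀ ℤ | d C = A}).Nonempty := by
    choose c hc using hrange
    exact ⟨vol (∑ i, c i), ∑ i, c i, by simp [map_sum, hc, hA], rfl⟩
  have hub : FV d A ≤ ∑ i, FV d (B i) := by
    have h1 : ∀ i, ∃ c, d c = B i ∧ vol c = FV d (B i) := by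
      intro i
      obtain ⟨c, hc1, hc2⟩ := Nat.sInf_mem (hBne i)
      exact ⟨c, hc1, hc2⟩
    choose c hc1 hc2 using h1
    have hdc : d (∑ i, c i) = A := by rw [map_sum, hA]; exact Finset.sum_congr rfl fun i _ => hc1 i
    calc FV d A ≤ vol (∑ i, c i) := Nat.sInf_le ⟨_, hdc, rfl⟩
    _ ≤ ∑ i, vol (c i) := vol_sum_le _ _
    _ = _ := Finset.sum_congr rfl fun i _ => hc2 i
  have hlb : ∑ i, FV d (B i) ≤ FV d A := by
    obtain ⟨C₀, hC₀, hvC₀⟩ := Nat.sInf_mem hAne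
    rw [Set.mem_setOf_eq] at hC₀
    rcases Nat.eq_zero_or_pos m with rfl | hm
    · simp
    have i0 : Fin m := ⟨0, hm⟩
    obtain ⟨n, f, hcon, hcomp, hsum, hvol⟩ := decomp d (vol C₀) C₀ le_rfl
    have hsuppA : A.support = Finset.univ.biUnion fun i => (B i).support := by
      rw [hA]; exact Finsupp.support_sum_eq_biUnion _ hdisj
    have hvolk : ∀ k, vol (f k) ≤ FV d A := by
      intro k
      calc vol (f k) ≤ ∑ j, vol (f j) :=
            Finset.single_le_sum (f := fun j => vol (f j)) (fun _ _ => Nat.zero_le _) (Finset.mem_univ k)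
      _ = vol C₀ := hvol
      _ = FV d A := hvC₀
    have hss : ∀ k, (d (f k)).support ⊆ A.support := by
      intro k
      have h2 : Subchain (d (f k)) (d C₀) := (hcomp k).2
      rw [hC₀] at h2
      exact h2.support_subset
    have key : ∀ k, ∃ i, (d (f k)).support ⊆ (B i).support := by
      intro k
      by_cases h : (d (f k)).support.Nonempty
      · obtain ⟨t, ht⟩ := h
        have htA := hss k ht
        rw [hsuppA, Finset.mem_biUnion] at htA
        obtain ⟨i, -, hi⟩ := htA
        refine ⟨i, fun t' ht' => ?_⟩
        have ht'A := hss k ht'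
        rw [hsuppA, Finset.mem_biUnion] at ht'A
        obtain ⟨j, -, hj⟩ := ht'A
        have hsub := hsep (f k) (hcon k) (hvolk k)
        have hji : j = i := hsub (Set.mem_setOf_eq ▸ ⟨t', Finset.mem_inter.mpr ⟨ht', hj⟩⟩)
          (Set.mem_setOf_eq ▸ ⟨t, Finset.mem_inter.mpr ⟨ht, hi⟩⟩)
        exact hji ▸ hj
      · rw [Finset.not_nonempty_iff_eq_empty] at h
        exact ⟨i0, by simp [h]⟩
    choose idx hidx using key
    set g : Fin m → (S →₀ ℤ) := fun i => ∑ k ∈ Finset.univ.filter (fun k => idx k = i), f k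
      with hg
    have hgsum : ∑ i, g i = C₀ := by
      rw [hg, Finset.sum_fiberwise Finset.univ idx f]
      exact hsum
    have hdg : ∀ i, (d (g i)).support ⊆ (B i).support := by
      intro i
      rw [hg]
      simp only [map_sum]
      refine (Finsupp.support_finset_sum).trans ?_
      intro t ht
      rw [Finset.mem_biUnion] at ht
      obtain ⟨k, hk, ht⟩ := ht
      have hki : idx k = i := (Finset.mem_filter.mp hk).2
      exact hki ▸ hidx k ht
    have hdgB : ∀ i, d (g i) = B i := by
      intro i
      ext t
      by_cases ht : t ∈ (B i).support
      · have h1 : ∀ j ∈ Finset.univ, j ≠ i → d (g j) t = 0 := by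
          intro j _ hj
          by_contra h0
          exact (Finset.disjoint_left.mp (hdisj j i hj))
            (hdg j (Finsupp.mem_support_iff.mpr h0)) ht
        have h2 : ∀ j ∈ Finset.univ, j ≠ i → B j t = 0 := by
          intro j _ hj
          by_contra h0
          exact (Finset.disjoint_left.mp (hdisj j i hj)) (Finsupp.mem_support_iff.mpr h0) ht
        have hAt : A t = B i t := by
          rw [hA, Finsupp.finset_sum_apply]
          exact Finset.sum_eq_single_of_mem i (Finset.mem_univ i) h2
        have hAt2 : A t = d (g i) t := by
          rw [← hC₀, ← hgsum, map_sum, Finsupp.finset_sum_apply]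
          exact Finset.sum_eq_single_of_mem i (Finset.mem_univ i) h1
        rw [← hAt2, hAt]
      · have h1 : B i t = 0 := Finsupp.notMem_support_iff.mp ht
        have h2 : d (g i) t = 0 := by
          by_contra h0
          exact ht (hdg i (Finsupp.mem_support_iff.mpr h0))
        rw [h1, h2]
    calc ∑ i, FV d (B i) ≤ ∑ i, vol (g i) :=
          Finset.sum_le_sum fun i _ => Nat.sInf_le ⟨g i, hdgB i, rfl⟩
    _ ≤ ∑ i, ∑ k ∈ Finset.univ.filter (fun k => idx k = i), vol (f k) :=
          Finset.sum_le_sum fun i _ => vol_sum_le _ _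
    _ = ∑ k, vol (f k) := Finset.sum_fiberwise Finset.univ idx (fun k => vol (f k))
    _ = vol C₀ := hvol
    _ = FV d A := hvC₀
  omega
end
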